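/- Let (C, J) be a small site, Z a Grothendieck topos, and p : C ⥤ Z a continuous flat functor (sends covers to effective epimorphic families and has left-exact left Kan extension). Then the left Kan extension of p along the Yoneda embedding factors through sheafification: p̃ ≅ a ⋙ p̃', where p̃' : Sheaf J Type ⥤ Z is cocontinuous, left exact, has a right adjoint, and satisfies p ≅ ε ⋙ p̃' for ε = yoneda ⋙ a. -/

import Mathlib

open CategoryTheory CategoryTheory.Limits

universe u

namespace Stmt19Aux

variable {C : Type u} [SmallCategory C] (J : GrothendieckTopology C)
  {D : Type u} [SmallCategory D] {K : GrothendieckTopology D}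
  {p : C ⥤ Sheaf K (Type u)}
  (pt : (Cᵒᵖ ⥤ Type u) ⥤ Sheaf K (Type u)) (α : p ⟶ yoneda ⋙ pt)
  [pt.IsLeftKanExtension α] [PreservesFiniteLimits pt]

/-- Comparison of `uliftYoneda` with `yoneda`. -/
noncomputable def eY : uliftYoneda.{u} (C := C) ⋙ 𝟭 _ ≅ yoneda :=
  Functor.rightUnitor _ ≪≫ uliftYonedaIsoYoneda

/-- `α` transported to `uliftYoneda`. -/
noncomputable def α' : p ⟶ uliftYoneda.{u} ⋙ pt :=
  α ≫ Functor.whiskerRight (eY (C := C)).inv _ ≫ (Functor.associator _ _ _).hom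

lemma isLKE' : pt.IsLeftKanExtension (α' pt α) :=
  (Functor.isLeftKanExtension_iff_postcomp₁ (𝟭 _) (eY (C := C)) α).1 inferInstance

lemma isIso_α : IsIso α := by
  haveI := isLKE' pt α
  haveI : HasColimitsOfSize.{u, u} (Sheaf K (Type u)) := Sheaf.instHasColimitsOfSize
  haveI : uliftYoneda.{u, u, u}.HasPointwiseLeftKanExtension p := inferInstance
  haveI : IsIso (α' pt α) := CategoryTheory.Presheaf.isIso_of_isLeftKanExtension (A := p) pt (α' pt α)
  have h2 : IsIso (α ≫ (Functor.isoWhiskerRight (eY (C := C)).symm pt ≪≫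
      Functor.associator _ _ _).hom) := this
  exact @IsIso.of_isIso_comp_right _ _ _ _ _ α
    (Functor.isoWhiskerRight (eY (C := C)).symm pt ≪≫ Functor.associator _ _ _).hom
    (Iso.isIso_hom _) h2

/-- The restricted Yoneda functor. -/
noncomputable def Presheaf.restrictedYoneda (p : C ⥤ Sheaf K (Type u)) :
    Sheaf K (Type u) ⥤ Cᵒᵖ ⥤ Type u :=
  CategoryTheory.Presheaf.restrictedULiftYoneda.{u} p

include α in
/-- The Yoneda adjunction. -/
noncomputable def Presheaf.yonedaAdjunction : pt ⊣ Presheaf.restrictedYoneda p :=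
  haveI := isLKE' pt α
  haveI : HasColimitsOfSize.{u, u} (Sheaf K (Type u)) := Sheaf.instHasColimitsOfSize
  haveI : uliftYoneda.{u, u, u}.HasPointwiseLeftKanExtension p := inferInstance
  CategoryTheory.Presheaf.uliftYonedaAdjunction (A := p) pt (α' pt α)

include α in
lemma isIso_map_functorInclusion
    (hcont : ∀ (X : C) (S : Sieve X), S ∈ J X →
      EffectiveEpiFamily (fun f : Σ Y : C, { g : Y ⟶ X // S g } => p.obj f.1)
        (fun f => p.map f.2.1))
    {X : C} (S : Sieve X) (hS : S ∈ J X) : IsIso (pt.map S.functorInclusion) := by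
  have : IsIso α := Stmt19Aux.isIso_α pt α
  have hmono : Mono (pt.map S.functorInclusion) := pt.map_mono _
  have hepi : Epi (pt.map S.functorInclusion) := by
    constructor
    intro z u v huv
    have hX : IsIso (α.app X) := inferInstance
    rw [← cancel_epi (α.app X)]
    have := hcont X S hS
    apply EffectiveEpiFamily.hom_ext
      (fun f : (Σ Y : C, { g : Y ⟶ X // S g }) => p.obj f.1) (fun f => p.map f.2.1)
    rintro ⟨Y, f, hf⟩
    let m : yoneda.obj Y ⟶ S.functor :=
      { app := fun W => TypeCat.ofHom (fun g => ⟨g ≫ f, S.downward_closed hf g⟩)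
        naturality := fun W W' h => by
          ext g
          exact Subtype.ext (by simp [Sieve.functor]) }
    have hm : m ≫ S.functorInclusion = yoneda.map f := rfl
    have hnat : p.map f ≫ α.app X = α.app Y ≫ pt.map (yoneda.map f) := α.naturality f
    have key : ∀ w : pt.obj (yoneda.obj X) ⟶ z,
        p.map f ≫ α.app X ≫ w = α.app Y ≫ pt.map m ≫ pt.map S.functorInclusion ≫ w := by
      intro w
      rw [← Category.assoc, hnat, ← hm, pt.map_comp]
      simp only [Category.assoc]
    dsimp only
    rw [key u, key v, huv]
  exact isIso_of_mono_of_epi _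

variable (hcont : ∀ (X : C) (S : Sieve X), S ∈ J X →
      EffectiveEpiFamily (fun f : Σ Y : C, { g : Y ⟶ X // S g } => p.obj f.1)
        (fun f => p.map f.2.1))

include α hcont in
lemma isSheaf_restrictedYoneda (z : Sheaf K (Type u)) :
    Presheaf.IsSheaf J ((Presheaf.restrictedYoneda p).obj z) := by
  rw [isSheaf_iff_isSheaf_of_type]
  apply Presieve.isSheaf_of_yoneda
  intro X S hS
  have hiso := isIso_map_functorInclusion J pt α hcont S hS
  letI adj := Presheaf.yonedaAdjunction pt α
  intro f
  refine ⟨adj.homEquiv _ z (inv (pt.map S.functorInclusion) ≫ (adj.homEquiv S.functor z).symm f),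
    ?_, ?_⟩
  · show S.functorInclusion ≫ _ = f
    rw [← Adjunction.homEquiv_naturality_left, IsIso.hom_inv_id_assoc,
      Equiv.apply_symm_apply]
  · intro g hg
    apply (adj.homEquiv _ z).symm.injective
    rw [Equiv.symm_apply_apply, ← hg, Adjunction.homEquiv_naturality_left_symm,
      IsIso.inv_hom_id_assoc]

/-- The right adjoint, valued in `J`-sheaves. -/
noncomputable def Rsh : Sheaf K (Type u) ⥤ Sheaf J (Type u) where
  obj z := ⟨(Presheaf.restrictedYoneda p).obj z, isSheaf_restrictedYoneda J pt α hcont z⟩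
  map f := ⟨(Presheaf.restrictedYoneda p).map f⟩
  map_id z := Sheaf.hom_ext ((Presheaf.restrictedYoneda p).map_id z)
  map_comp f g := Sheaf.hom_ext ((Presheaf.restrictedYoneda p).map_comp f g)

/-- The factorization of `pt` through sheaves. -/
def pt' : Sheaf J (Type u) ⥤ Sheaf K (Type u) := sheafToPresheaf J (Type u) ⋙ pt

/-- The adjunction `pt' ⊣ Rsh`. -/
noncomputable def adj' : pt' J pt ⊣ Rsh J pt α hcont :=
  Adjunction.mkOfHomEquiv
    { homEquiv := fun F z =>
        ((Presheaf.yonedaAdjunction pt α).homEquiv F.val z).trans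
          { toFun := fun g => ⟨g⟩
            invFun := fun g => g.hom
            left_inv := fun _ => rfl
            right_inv := fun _ => rfl }
      homEquiv_naturality_left_symm := fun {F G z} f g =>
        (Presheaf.yonedaAdjunction pt α).homEquiv_naturality_left_symm f.hom g.hom
      homEquiv_naturality_right := fun {F z z'} g f =>
        Sheaf.hom_ext ((Presheaf.yonedaAdjunction pt α).homEquiv_naturality_right g f) }

include α hcont in
lemma isIso_map_toSheafify (P : Cᵒᵖ ⥤ Type u) : IsIso (pt.map (toSheafify J P)) := by
  letI adj := Presheaf.yonedaAdjunction pt α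
  rw [isIso_iff_coyoneda_map_bijective]
  intro z
  let Rz : Sheaf J (Type u) := (Rsh J pt α hcont).obj z
  have bij : Function.Bijective
      (fun g : (sheafToPresheaf J (Type u)).obj ((presheafToSheaf J (Type u)).obj P) ⟶
        (Presheaf.restrictedYoneda p).obj z => toSheafify J P ≫ g) := by
    let e2 : ((presheafToSheaf J (Type u)).obj P ⟶ Rz) ≃
        ((sheafToPresheaf J (Type u)).obj ((presheafToSheaf J (Type u)).obj P) ⟶
          (Presheaf.restrictedYoneda p).obj z) :=
      { toFun := fun g => g.hom
        invFun := fun g => ⟨g⟩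
        left_inv := fun _ => rfl
        right_inv := fun _ => rfl }
    have heq : (fun g : (sheafToPresheaf J (Type u)).obj ((presheafToSheaf J (Type u)).obj P) ⟶
        (Presheaf.restrictedYoneda p).obj z => toSheafify J P ≫ g) =
        (e2.symm.trans ((sheafificationAdjunction J (Type u)).homEquiv P Rz)) := by
      funext g
      rw [Equiv.trans_apply, Adjunction.homEquiv_unit, sheafificationAdjunction_unit_app]
      rfl
    rw [heq]
    exact (e2.symm.trans ((sheafificationAdjunction J (Type u)).homEquiv P Rz)).bijective
  have heq2 : (fun g : pt.obj ((sheafToPresheaf J (Type u)).obj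
        ((presheafToSheaf J (Type u)).obj P)) ⟶ z => pt.map (toSheafify J P) ≫ g) =
      (adj.homEquiv P z).symm ∘
        (fun h : (sheafToPresheaf J (Type u)).obj ((presheafToSheaf J (Type u)).obj P) ⟶
          (Presheaf.restrictedYoneda p).obj z => toSheafify J P ≫ h) ∘ (adj.homEquiv _ z) := by
    funext g
    apply (adj.homEquiv P z).injective
    simp only [Function.comp_apply, Equiv.apply_symm_apply]
    exact adj.homEquiv_naturality_left (toSheafify J P) g
  have hb := (adj.homEquiv P z).symm.bijective.comp (bij.comp (adj.homEquiv _ z).bijective)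
  rwa [← heq2] at hb

end Stmt19Aux

theorem stmt19' {C : Type u} [SmallCategory C] (J : GrothendieckTopology C)
    {D : Type u} [SmallCategory D] (K : GrothendieckTopology D)
    (p : C ⥤ Sheaf K (Type u))
    (hcont : ∀ (X : C) (S : Sieve X), S ∈ J X →
      EffectiveEpiFamily
        (fun f : Σ Y : C, { g : Y ⟶ X // S g } => p.obj f.1)
        (fun f => p.map f.2.1))
    (pt : (Cᵒᵖ ⥤ Type u) ⥤ Sheaf K (Type u)) (α : p ⟶ yoneda ⋙ pt)
    [pt.IsLeftKanExtension α] [PreservesFiniteLimits pt] :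
    ∃ pt' : Sheaf J (Type u) ⥤ Sheaf K (Type u),
      Nonempty (pt ≅ presheafToSheaf J (Type u) ⋙ pt') ∧
      Nonempty (PreservesColimits pt') ∧
      Nonempty (PreservesFiniteLimits pt') ∧
      pt'.IsLeftAdjoint ∧
      Nonempty (p ≅ (yoneda ⋙ presheafToSheaf J (Type u)) ⋙ pt') := by
  have : IsIso α := Stmt19Aux.isIso_α pt α
  haveI : ∀ P, IsIso (pt.map (toSheafify J P)) := Stmt19Aux.isIso_map_toSheafify J pt α hcont
  let e : pt ≅ presheafToSheaf J (Type u) ⋙ Stmt19Aux.pt' J pt :=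
    NatIso.ofComponents (fun P => @asIso _ _ _ _ (pt.map (toSheafify J P))
      (Stmt19Aux.isIso_map_toSheafify J pt α hcont P))
      (fun {P Q} f => by
        dsimp [Stmt19Aux.pt']
        rw [← Functor.map_comp, ← Functor.map_comp, toSheafify_naturality])
  exact ⟨Stmt19Aux.pt' J pt, ⟨e⟩,
    ⟨(Stmt19Aux.adj' J pt α hcont).leftAdjoint_preservesColimits⟩,
    ⟨comp_preservesFiniteLimits _ _⟩,
    ⟨Stmt19Aux.Rsh J pt α hcont, ⟨Stmt19Aux.adj' J pt α hcont⟩⟩,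
    ⟨asIso α ≪≫ Functor.isoWhiskerLeft yoneda e ≪≫ (Functor.associator _ _ _).symm⟩⟩

/-- Yoneda VI: let `(C, J)` be a small site and `Z` a Grothendieck topos
(presented as sheaves on a small site `(D, K)`). Let `p : C ⥤ Z` be continuous
(covering sieves are sent to effectively epimorphic families) and flat (its
left Kan extension `pt` along the Yoneda embedding preserves finite limits).
Then `pt` factors through sheafification via a functor
`pt' : Sheaf J Type ⥤ Z` which preserves colimits and finite limits, has a
right adjoint, and satisfies `p ≅ ε ⋙ pt'` for `ε = yoneda ⋙ sheafification`. -/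
theorem stmt19 {C : Type u} [SmallCategory C] (J : GrothendieckTopology C)
    {D : Type u} [SmallCategory D] (K : GrothendieckTopology D)
    (p : C ⥤ Sheaf K (Type u))
    (hcont : ∀ (X : C) (S : Sieve X), S ∈ J X →
      EffectiveEpiFamily
        (fun f : Σ Y : C, { g : Y ⟶ X // S g } => p.obj f.1)
        (fun f => p.map f.2.1))
    (pt : (Cᵒᵖ ⥤ Type u) ⥤ Sheaf K (Type u)) (α : p ⟶ yoneda ⋙ pt)
    [pt.IsLeftKanExtension α] [PreservesFiniteLimits pt] :
    ∃ pt' : Sheaf J (Type u) ⥤ Sheaf K (Type u),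
      Nonempty (pt ≅ presheafToSheaf J (Type u) ⋙ pt') ∧
      Nonempty (PreservesColimits pt') ∧
      Nonempty (PreservesFiniteLimits pt') ∧
      pt'.IsLeftAdjoint ∧
      Nonempty (p ≅ (yoneda ⋙ presheafToSheaf J (Type u)) ⋙ pt') := by
  exact stmt19' J K p hcont pt α
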